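/- Let ν > 0 and λ ≥ 0 be Lamé coefficients, η > 0, T > 0, and let U : ℝ³ → ℝ³ be a C¹ vector field. Suppose p : (0,T) × ℝ³ → ℝ and u : (0,T) × ℝ³ → ℝ³ are C¹ in (t,x) with second spatial derivatives of u existing and jointly continuous, and suppose there is a compact set K ⊂ ℝ³ such that for every t the functions p(t,·) and u(t,·) are supported in K. Assume that on (0,T) × ℝ³: ∂_t p + U·∇p + div u = 0 and ∂_t u + U·∇u − div σ(u) + ηu + ∇p = 0. Then the function E(t) := ½∫_{ℝ³}(p(t,x)² + |u(t,x)|²) dx is differentiable on (0,T) and satisfies E′(t) = −∫_{ℝ³} σ(u(t)) : ε(u(t)) dx − η∫_{ℝ³} |u(t)|² dx + ½∫_{ℝ³} (div U)(x)·(p(t,x)² + |u(t,x)|²) dx for all t ∈ (0,T). -/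

import Mathlib

open MeasureTheory

noncomputable section

/-- Partial derivative in the `i`-th coordinate direction on `ℝ³`. -/
def pd {F : Type*} [NormedAddCommGroup F] [NormedSpace ℝ F]
    (f : EuclideanSpace ℝ (Fin 3) → F) (i : Fin 3) (x : EuclideanSpace ℝ (Fin 3)) : F :=
  fderiv ℝ f x (EuclideanSpace.single i 1)

/-- Divergence of a vector field on `ℝ³`. -/
def divg (v : EuclideanSpace ℝ (Fin 3) → EuclideanSpace ℝ (Fin 3))
    (x : EuclideanSpace ℝ (Fin 3)) : ℝ :=
  ∑ i, pd (fun y => v y i) i x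

/-- Strain tensor `ε_{ij}(μ) = ½(∂μ_j/∂x_i + ∂μ_i/∂x_j)`. -/
def strain (μ : EuclideanSpace ℝ (Fin 3) → EuclideanSpace ℝ (Fin 3))
    (i j : Fin 3) (x : EuclideanSpace ℝ (Fin 3)) : ℝ :=
  (pd (fun y => μ y j) i x + pd (fun y => μ y i) j x) / 2

/-- Stress tensor `σ(μ) = 2ν ε(μ) + λ (tr ε(μ)) I₃`. -/
def stress (ν lam : ℝ) (μ : EuclideanSpace ℝ (Fin 3) → EuclideanSpace ℝ (Fin 3))
    (i j : Fin 3) (x : EuclideanSpace ℝ (Fin 3)) : ℝ :=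
  2 * ν * strain μ i j x + (if i = j then lam * (∑ k, strain μ k k x) else 0)

/-- `i`-th component of the divergence of the stress tensor. -/
def divStress (ν lam : ℝ) (μ : EuclideanSpace ℝ (Fin 3) → EuclideanSpace ℝ (Fin 3))
    (i : Fin 3) (x : EuclideanSpace ℝ (Fin 3)) : ℝ :=
  ∑ j, pd (stress ν lam μ i j) j x

open Metric Set

abbrev E3 := EuclideanSpace ℝ (Fin 3)

lemma pd_add {f g : E3 → ℝ} {x : E3} (i : Fin 3) (hf : DifferentiableAt ℝ f x)
    (hg : DifferentiableAt ℝ g x) :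
    pd (fun y => f y + g y) i x = pd f i x + pd g i x := by
  simp [pd, fderiv_fun_add hf hg]

lemma pd_sub {f g : E3 → ℝ} {x : E3} (i : Fin 3) (hf : DifferentiableAt ℝ f x)
    (hg : DifferentiableAt ℝ g x) :
    pd (fun y => f y - g y) i x = pd f i x - pd g i x := by
  simp [pd, fderiv_fun_sub hf hg]

lemma pd_mul {f g : E3 → ℝ} {x : E3} (i : Fin 3) (hf : DifferentiableAt ℝ f x)
    (hg : DifferentiableAt ℝ g x) :
    pd (fun y => f y * g y) i x = pd f i x * g x + f x * pd g i x := by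
  simp [pd, fderiv_fun_mul hf hg]; ring

lemma pd_sum {ι : Type*} (s : Finset ι) {f : ι → E3 → ℝ} {x : E3} (i : Fin 3)
    (hf : ∀ k ∈ s, DifferentiableAt ℝ (f k) x) :
    pd (fun y => ∑ k ∈ s, f k y) i x = ∑ k ∈ s, pd (f k) i x := by
  simp [pd, fderiv_fun_sum hf]

lemma pd_div_const {f : E3 → ℝ} {x : E3} (i : Fin 3) (c : ℝ) (hf : DifferentiableAt ℝ f x) :
    pd (fun y => f y / c) i x = pd f i x / c := by
  simp only [pd, div_eq_mul_inv, fderiv_mul_const hf]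
  simp [mul_comm]

lemma pd_pow_two {f : E3 → ℝ} {x : E3} (i : Fin 3) (hf : DifferentiableAt ℝ f x) :
    pd (fun y => f y ^ 2) i x = 2 * f x * pd f i x := by
  have : (fun y => f y ^ 2) = fun y => f y * f y := by funext y; ring
  rw [this, pd_mul i hf hf]; ring

lemma pd_eq_zero_of_nmem {f : E3 → ℝ} {x : E3} (i : Fin 3) (h : x ∉ tsupport f) :
    pd f i x = 0 := by
  rw [pd, fderiv_of_notMem_tsupport (𝕜 := ℝ) h]; rfl

lemma contDiff_pd {f : E3 → ℝ} (hf : ContDiff ℝ 2 f) (i : Fin 3) :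
    ContDiff ℝ 1 (pd f i) := by
  unfold pd
  exact (ContinuousLinearMap.apply ℝ ℝ (EuclideanSpace.single i 1)).contDiff.comp
    (hf.fderiv_right (m := 1) (by norm_num))

lemma continuous_pd {f : E3 → ℝ} (hf : ContDiff ℝ 1 f) (i : Fin 3) :
    Continuous (pd f i) := by
  unfold pd
  exact (ContinuousLinearMap.apply ℝ ℝ (EuclideanSpace.single i 1)).continuous.comp
    (hf.continuous_fderiv one_ne_zero)

lemma contDiff_coord {u : E3 → E3} (n : ℕ∞) (hu : ContDiff ℝ n u) (i : Fin 3) :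
    ContDiff ℝ n (fun y => u y i) :=
  (EuclideanSpace.proj (𝕜 := ℝ) i).contDiff.comp hu

lemma contDiff_strain {μ : E3 → E3} (hμ : ContDiff ℝ 2 μ) (i j : Fin 3) :
    ContDiff ℝ 1 (strain μ i j) := by
  unfold strain
  exact ((contDiff_pd (contDiff_coord 2 hμ j) i).add
    (contDiff_pd (contDiff_coord 2 hμ i) j)).div_const 2

lemma contDiff_stress {ν lam : ℝ} {μ : E3 → E3} (hμ : ContDiff ℝ 2 μ) (i j : Fin 3) :
    ContDiff ℝ 1 (stress ν lam μ i j) := by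
  unfold stress
  by_cases h : i = j
  · simp only [h, if_true]
    exact (contDiff_const.mul (contDiff_strain hμ j j)).add
      (contDiff_const.mul (ContDiff.sum fun k _ => contDiff_strain hμ k k))
  · simp only [h, if_false]
    exact ((contDiff_const.mul (contDiff_strain hμ i j)).add contDiff_const)

lemma strain_zero_of_nmem {μ : E3 → E3} {x : E3} (i j : Fin 3)
    (h : x ∉ tsupport μ) : strain μ i j x = 0 := by
  have hc : ∀ k : Fin 3, x ∉ tsupport (fun y => μ y k) := by
    intro k hk
    exact h (closure_mono (Function.support_subset_iff.2
      (fun y hy => fun h0 => hy (by rw [h0]; rfl))) hk)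
  unfold strain
  rw [pd_eq_zero_of_nmem i (hc j), pd_eq_zero_of_nmem j (hc i)]
  norm_num

lemma integral_fderiv_apply_eq_zero (f : E3 → ℝ) (hf : ContDiff ℝ 1 f)
    (hsupp : HasCompactSupport f) (v : E3) :
    ∫ x : E3, fderiv ℝ f x v = 0 := by
  obtain ⟨C, hC⟩ := (hsupp.fderiv ℝ).exists_bound_of_continuous (hf.continuous_fderiv one_ne_zero)
  set K' : Set E3 := Metric.cthickening ‖v‖ (tsupport f) with hK'
  have hK'c : IsCompact K' := hsupp.cthickening
  have hbd_int : Integrable (K'.indicator fun _ => C * ‖v‖) := by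
    rw [integrable_indicator_iff hK'c.measurableSet]
    exact integrableOn_const hK'c.measure_lt_top.ne
  have hdiff : ∀ (s : ℝ) (x : E3),
      HasDerivAt (fun r : ℝ => f (x + r • v)) (fderiv ℝ f (x + s • v) v) s := by
    intro s x
    have h1 : HasDerivAt (fun r : ℝ => x + r • v) v s := by
      simpa using ((hasDerivAt_id s).smul_const v).const_add x
    exact ((hf.differentiable one_ne_zero (x + s • v)).hasFDerivAt).comp_hasDerivAt s h1
  have key := hasDerivAt_integral_of_dominated_loc_of_deriv_le (μ := volume)
    (F := fun (s : ℝ) (x : E3) => f (x + s • v))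
    (F' := fun (s : ℝ) (x : E3) => fderiv ℝ f (x + s • v) v)
    (x₀ := (0:ℝ)) (bound := K'.indicator fun _ => C * ‖v‖) (Metric.ball_mem_nhds 0 one_pos)
    (by
      filter_upwards with s
      exact (hf.continuous.comp (by fun_prop)).aestronglyMeasurable)
    (by
      simp only [zero_smul, add_zero]
      exact hf.continuous.integrable_of_hasCompactSupport hsupp)
    (by
      apply Continuous.aestronglyMeasurable
      have := (hf.continuous_fderiv one_ne_zero)
      fun_prop)
    (by
      filter_upwards with x s hs
      by_cases hx : x ∈ K'
      · rw [Set.indicator_of_mem hx]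
        exact ((fderiv ℝ f (x + s • v)).le_opNorm v).trans
          (mul_le_mul_of_nonneg_right (hC _) (norm_nonneg v))
      · rw [Set.indicator_of_notMem hx]
        have hxK : x + s • v ∉ tsupport f := by
          intro hmem
          apply hx
          apply Metric.mem_cthickening_of_dist_le x (x + s • v) _ _ hmem
          simp only [dist_self_add_right, norm_smul, Real.norm_eq_abs]
          have : |s| ≤ 1 := by
            have := mem_ball_iff_norm.mp hs
            simpa using this.le
          nlinarith [norm_nonneg v, abs_nonneg s]
        rw [fderiv_of_notMem_tsupport (𝕜 := ℝ) hxK]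
        simp)
    hbd_int
    (by
      filter_upwards with x s _
      exact hdiff s x)
  have hconst : (fun s : ℝ => ∫ x : E3, f (x + s • v)) = fun _ => ∫ x : E3, f x := by
    funext s
    exact integral_add_right_eq_self f (s • v)
  have h0 : HasDerivAt (fun s : ℝ => ∫ x : E3, f (x + s • v)) 0 0 := by
    rw [hconst]; exact hasDerivAt_const _ _
  have h1 := key.2.unique h0
  rw [← h1]
  congr 1
  funext x
  simp


/-- differential form of the energy balance for the linearized
compressible Navier–Stokes (Oseen) system
`∂ₜp + U·∇p + div u = 0`, `∂ₜu + U·∇u − div σ(u) + ηu + ∇p = 0`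
with compactly supported smooth data: the energy
`E(t) = ½∫ (p² + |u|²)` is differentiable on `(0,T)` with
`E'(t) = −∫ σ(u):ε(u) − η∫|u|² + ½∫ (div U)(p² + |u|²)`. -/
theorem energy_balance_differential
    (ν lam η T : ℝ) (hν : 0 < ν) (hlam : 0 ≤ lam) (hη : 0 < η) (hT : 0 < T)
    (U : EuclideanSpace ℝ (Fin 3) → EuclideanSpace ℝ (Fin 3)) (hU : ContDiff ℝ 1 U)
    (p : ℝ → EuclideanSpace ℝ (Fin 3) → ℝ)
    (u : ℝ → EuclideanSpace ℝ (Fin 3) → EuclideanSpace ℝ (Fin 3))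
    (hp : ContDiffOn ℝ 1 (fun q : ℝ × EuclideanSpace ℝ (Fin 3) => p q.1 q.2)
      (Set.Ioo 0 T ×ˢ Set.univ))
    (hu : ContDiffOn ℝ 1 (fun q : ℝ × EuclideanSpace ℝ (Fin 3) => u q.1 q.2)
      (Set.Ioo 0 T ×ˢ Set.univ))
    (hu2 : ∀ t ∈ Set.Ioo (0 : ℝ) T, ContDiff ℝ 2 (u t))
    (hu2c : ContinuousOn
      (fun q : ℝ × EuclideanSpace ℝ (Fin 3) => fderiv ℝ (fderiv ℝ (u q.1)) q.2)
      (Set.Ioo 0 T ×ˢ Set.univ))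
    (K : Set (EuclideanSpace ℝ (Fin 3))) (hK : IsCompact K)
    (hsupp : ∀ t ∈ Set.Ioo (0 : ℝ) T, tsupport (p t) ⊆ K ∧ tsupport (u t) ⊆ K)
    (hpde1 : ∀ t ∈ Set.Ioo (0 : ℝ) T, ∀ x,
      deriv (fun s => p s x) t + (∑ i, U x i * pd (p t) i x) + divg (u t) x = 0)
    (hpde2 : ∀ t ∈ Set.Ioo (0 : ℝ) T, ∀ x, ∀ i : Fin 3,
      deriv (fun s => u s x i) t + (∑ j, U x j * pd (fun y => u t y i) j x)
        - divStress ν lam (u t) i x + η * u t x i + pd (p t) i x = 0) :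
    ∀ t ∈ Set.Ioo (0 : ℝ) T,
      HasDerivAt (fun s => (1 / 2) * ∫ x, ((p s x) ^ 2 + ∑ i, (u s x i) ^ 2))
        (-(∫ x, ∑ i, ∑ j, stress ν lam (u t) i j x * strain (u t) i j x)
          - η * (∫ x, ∑ i, (u t x i) ^ 2)
          + (1 / 2) * ∫ x, divg U x * ((p t x) ^ 2 + ∑ i, (u t x i) ^ 2)) t := by
  classical
  have hΩ : IsOpen (Set.Ioo (0:ℝ) T ×ˢ (Set.univ : Set E3)) := isOpen_Ioo.prod isOpen_univ
  have hmem : ∀ s ∈ Set.Ioo (0:ℝ) T, ∀ x : E3,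
      (s, x) ∈ Set.Ioo (0:ℝ) T ×ˢ (Set.univ : Set E3) := fun s hs x => ⟨hs, trivial⟩
  -- time derivatives
  set dtp : ℝ × E3 → ℝ :=
    fun q => fderiv ℝ (fun q' : ℝ × E3 => p q'.1 q'.2) q (1, 0) with hdtp_def
  set dtu : ℝ × E3 → E3 :=
    fun q => fderiv ℝ (fun q' : ℝ × E3 => u q'.1 q'.2) q (1, 0) with hdtu_def
  have hcurve : ∀ (s : ℝ) (x : E3), HasDerivAt (fun r : ℝ => ((r, x) : ℝ × E3)) (1, 0) s :=
    fun s x => (hasDerivAt_id s).prodMk (hasDerivAt_const s x)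
  have hdp : ∀ s ∈ Set.Ioo (0:ℝ) T, ∀ x : E3, HasDerivAt (fun r => p r x) (dtp (s, x)) s := by
    intro s hs x
    exact (((hp.differentiableOn one_ne_zero).differentiableAt
      (hΩ.mem_nhds (hmem s hs x))).hasFDerivAt).comp_hasDerivAt s (hcurve s x)
  have hduE : ∀ s ∈ Set.Ioo (0:ℝ) T, ∀ x : E3, HasDerivAt (fun r => u r x) (dtu (s, x)) s := by
    intro s hs x
    exact (((hu.differentiableOn one_ne_zero).differentiableAt
      (hΩ.mem_nhds (hmem s hs x))).hasFDerivAt).comp_hasDerivAt s (hcurve s x)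
  have hdu : ∀ s ∈ Set.Ioo (0:ℝ) T, ∀ x : E3, ∀ i : Fin 3,
      HasDerivAt (fun r => u r x i) (dtu (s, x) i) s := by
    intro s hs x i
    have := ((EuclideanSpace.proj (𝕜 := ℝ) i).hasFDerivAt).comp_hasDerivAt s (hduE s hs x)
    exact this
  -- slices are smooth
  have hpt : ∀ s ∈ Set.Ioo (0:ℝ) T, ContDiff ℝ 1 (p s) := by
    intro s hs
    rw [contDiff_iff_contDiffAt]
    intro x
    exact (hp.contDiffAt (hΩ.mem_nhds (hmem s hs x))).comp x
      ((contDiff_const.prodMk contDiff_id).contDiffAt)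
  have hus : ∀ s ∈ Set.Ioo (0:ℝ) T, ContDiff ℝ 1 (u s) := by
    intro s hs
    rw [contDiff_iff_contDiffAt]
    intro x
    exact (hu.contDiffAt (hΩ.mem_nhds (hmem s hs x))).comp x
      ((contDiff_const.prodMk contDiff_id).contDiffAt)
  -- vanishing outside K
  have hz : ∀ s ∈ Set.Ioo (0:ℝ) T, ∀ x ∉ K, p s x = 0 ∧ u s x = 0 := by
    intro s hs x hx
    refine ⟨image_eq_zero_of_notMem_tsupport fun h => hx ((hsupp s hs).1 h),
      image_eq_zero_of_notMem_tsupport fun h => hx ((hsupp s hs).2 h)⟩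
  -- joint continuity of the time-derivative integrand
  set Φ : ℝ × E3 → ℝ :=
    fun q => 2 * (p q.1 q.2 * dtp q) + ∑ i, 2 * (u q.1 q.2 i * dtu q i) with hΦ_def
  have hΦc : ContinuousOn Φ (Set.Ioo (0:ℝ) T ×ˢ (Set.univ : Set E3)) := by
    have h1 : ContinuousOn dtp (Set.Ioo (0:ℝ) T ×ˢ (Set.univ : Set E3)) :=
      (hp.continuousOn_fderiv_of_isOpen hΩ le_rfl).clm_apply continuousOn_const
    have h2 : ContinuousOn dtu (Set.Ioo (0:ℝ) T ×ˢ (Set.univ : Set E3)) :=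
      (hu.continuousOn_fderiv_of_isOpen hΩ le_rfl).clm_apply continuousOn_const
    refine (continuousOn_const.mul ((hp.continuousOn).mul h1)).add
      (continuousOn_finset_sum _ fun i _ => continuousOn_const.mul (ContinuousOn.mul ?_ ?_))
    · exact (EuclideanSpace.proj (𝕜 := ℝ) i).continuous.comp_continuousOn hu.continuousOn
    · exact (EuclideanSpace.proj (𝕜 := ℝ) i).continuous.comp_continuousOn h2
  -- derivative of the integrand
  have hQd : ∀ s ∈ Set.Ioo (0:ℝ) T, ∀ x : E3,
      HasDerivAt (fun r => (p r x) ^ 2 + ∑ i, (u r x i) ^ 2) (Φ (s, x)) s := by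
    intro s hs x
    have h3 := ((hdp s hs x).fun_pow 2).fun_add
      (HasDerivAt.fun_sum (fun i (_ : i ∈ Finset.univ) => (hdu s hs x i).fun_pow 2))
    refine h3.congr_deriv ?_
    simp only [hΦ_def, pow_one, Nat.cast_ofNat]
    congr 1
    · ring
    · exact Finset.sum_congr rfl fun i _ => by ring
  intro t ht
  set ε : ℝ := min t (T - t) / 2 with hε_def
  have hε0 : 0 < ε := by
    have := lt_min ht.1 (sub_pos.2 ht.2)
    positivity
  have hIcc : Set.Icc (t - ε) (t + ε) ⊆ Set.Ioo 0 T := by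
    intro s hs
    have h1 : ε ≤ t / 2 := by
      rw [hε_def]; have := min_le_left t (T - t); linarith
    have h2 : ε ≤ (T - t) / 2 := by
      rw [hε_def]; have := min_le_right t (T - t); linarith
    obtain ⟨hs1, hs2⟩ := hs
    constructor <;> [linarith [ht.1]; linarith [ht.2]]
  have hball : Metric.ball t ε ⊆ Set.Icc (t - ε) (t + ε) := by
    rw [Real.ball_eq_Ioo]; exact Set.Ioo_subset_Icc_self
  have hballIoo : Metric.ball t ε ⊆ Set.Ioo 0 T := hball.trans hIcc
  obtain ⟨C, hC⟩ := (isCompact_Icc.prod hK).exists_bound_of_continuousOn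
    (hΦc.mono (fun q hq => ⟨hIcc hq.1, trivial⟩))
  have hbnd_int : Integrable (K.indicator fun _ : E3 => C) := by
    rw [integrable_indicator_iff hK.measurableSet]
    exact integrableOn_const hK.measure_lt_top.ne
  have key := hasDerivAt_integral_of_dominated_loc_of_deriv_le (μ := volume) (x₀ := t)
    (F := fun (s : ℝ) (x : E3) => (p s x) ^ 2 + ∑ i, (u s x i) ^ 2)
    (F' := fun (s : ℝ) (x : E3) => Φ (s, x))
    (bound := K.indicator fun _ : E3 => C) (Metric.ball_mem_nhds t hε0)
    (by
      filter_upwards [Ioo_mem_nhds ht.1 ht.2] with s hs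
      exact (((hpt s hs).continuous.pow 2).add (continuous_finset_sum _ fun i _ =>
        (((EuclideanSpace.proj (𝕜 := ℝ) i).continuous.comp
          (hus s hs).continuous).pow 2))).aestronglyMeasurable)
    (by
      refine Continuous.integrable_of_hasCompactSupport
        (((hpt t ht).continuous.pow 2).add (continuous_finset_sum _ fun i _ =>
          (((EuclideanSpace.proj (𝕜 := ℝ) i).continuous.comp
            (hus t ht).continuous).pow 2)))
        (HasCompactSupport.intro hK fun x hx => ?_)
      obtain ⟨h1, h2⟩ := hz t ht x hx
      simp [h1, h2])
    (by
      refine Continuous.aestronglyMeasurable ?_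
      have := hΦc.comp_continuous (f := fun x : E3 => ((t, x) : ℝ × E3))
        (continuous_const.prodMk continuous_id) (fun x => hmem t ht x)
      exact this)
    (by
      filter_upwards with x s hs
      by_cases hx : x ∈ K
      · rw [Set.indicator_of_mem hx]
        exact hC (s, x) ⟨hball hs, hx⟩
      · rw [Set.indicator_of_notMem hx]
        obtain ⟨h1, h2⟩ := hz s (hballIoo hs) x hx
        have h2' : ∀ i : Fin 3, u s x i = 0 := by
          intro i; rw [h2]; rfl
        simp [hΦ_def, h1, h2'])
    hbnd_int
    (by
      filter_upwards with x s hs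
      exact hQd s (hballIoo hs) x)
  have hE : HasDerivAt (fun s => (1 / 2 : ℝ) * ∫ x : E3, ((p s x) ^ 2 + ∑ i, (u s x i) ^ 2))
      ((1 / 2) * ∫ x : E3, Φ (t, x)) t := key.2.const_mul (1 / 2)
  have hval : (1 / 2 : ℝ) * ∫ x : E3, Φ (t, x)
      = -(∫ x, ∑ i, ∑ j, stress ν lam (u t) i j x * strain (u t) i j x)
          - η * (∫ x, ∑ i, (u t x i) ^ 2)
          + (1 / 2) * ∫ x, divg U x * ((p t x) ^ 2 + ∑ i, (u t x i) ^ 2) := by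
    have hut : ContDiff ℝ 2 (u t) := hu2 t ht
    have hu1t : ContDiff ℝ 1 (u t) := hut.of_le one_le_two
    have hptc : ContDiff ℝ 1 (p t) := hpt t ht
    set A : E3 → ℝ := fun x => p t x * dtp (t, x) + ∑ i, u t x i * dtu (t, x) i with hA_def
    have hΦint : ∫ x : E3, Φ (t, x) = 2 * ∫ x : E3, A x := by
      have hfe : (fun x : E3 => Φ (t, x)) = fun x : E3 => 2 * A x := by
        funext x
        simp only [hΦ_def, hA_def, mul_add, Finset.mul_sum]
      rw [hfe, integral_const_mul]
    set G : Fin 3 → E3 → ℝ := fun j y =>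
      U y j * (((p t y) ^ 2 + ∑ i, (u t y i) ^ 2) / 2) + p t y * u t y j
        - ∑ i, u t y i * stress ν lam (u t) i j y with hG_def
    have hGc : ∀ j, ContDiff ℝ 1 (G j) := by
      intro j
      refine ContDiff.sub (ContDiff.add (ContDiff.mul (contDiff_coord 1 hU j)
        (ContDiff.div_const (ContDiff.add (hptc.pow 2)
          (ContDiff.sum fun i _ => (contDiff_coord 1 hu1t i).pow 2)) 2))
        (hptc.mul (contDiff_coord 1 hu1t j)))
        (ContDiff.sum fun i _ => (contDiff_coord 1 hu1t i).mul (contDiff_stress hut i j))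
    have hGsupp : ∀ j, HasCompactSupport (G j) := by
      intro j
      refine HasCompactSupport.intro hK fun x hx => ?_
      obtain ⟨h1, h2⟩ := hz t ht x hx
      have h2' : ∀ i : Fin 3, u t x i = 0 := fun i => by rw [h2]; rfl
      simp [hG_def, h1, h2']
    have hIBP : ∀ j, ∫ x : E3, pd (G j) j x = 0 := by
      intro j
      have := integral_fderiv_apply_eq_zero (G j) (hGc j) (hGsupp j) (EuclideanSpace.single j 1)
      simpa [pd] using this
    have hns : ∀ x : E3, x ∉ K → x ∉ tsupport (u t) := fun x hx h => hx ((hsupp t ht).2 h)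
    have hpid : ∀ x : E3, A x =
        (-(∑ i, ∑ j, stress ν lam (u t) i j x * strain (u t) i j x)
          - η * (∑ i, (u t x i) ^ 2)
          + divg U x * (((p t x) ^ 2 + ∑ i, (u t x i) ^ 2)) / 2)
        - ∑ j, pd (G j) j x := by
      intro x
      have dP : DifferentiableAt ℝ (p t) x := (hptc.differentiable one_ne_zero) x
      have dui : ∀ i : Fin 3, DifferentiableAt ℝ (fun y => u t y i) x :=
        fun i => ((contDiff_coord 1 hu1t i).differentiable one_ne_zero) x
      have dUj : ∀ j : Fin 3, DifferentiableAt ℝ (fun y => U y j) x :=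
        fun j => ((contDiff_coord 1 hU j).differentiable one_ne_zero) x
      have dσ : ∀ i j : Fin 3, DifferentiableAt ℝ (stress ν lam (u t) i j) x :=
        fun i j => ((contDiff_stress hut i j).differentiable one_ne_zero) x
      have dQ : DifferentiableAt ℝ (fun y => (p t y) ^ 2 + ∑ i, (u t y i) ^ 2) x :=
        (dP.pow 2).add (DifferentiableAt.fun_sum fun i _ => (dui i).pow 2)
      have dF : DifferentiableAt ℝ (fun y => ((p t y) ^ 2 + ∑ i, (u t y i) ^ 2) / 2) x :=
        by simp only [div_eq_mul_inv]; exact dQ.mul_const _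
      have hkey : ∀ j, pd (G j) j x =
          (pd (fun y => U y j) j x * (((p t x) ^ 2 + ∑ i, (u t x i) ^ 2) / 2)
            + U x j * ((2 * p t x * pd (p t) j x
                + ∑ i, 2 * u t x i * pd (fun y => u t y i) j x) / 2))
          + (pd (p t) j x * u t x j + p t x * pd (fun y => u t y j) j x)
          - ∑ i, (pd (fun y => u t y i) j x * stress ν lam (u t) i j x
              + u t x i * pd (stress ν lam (u t) i j) j x) := by
        intro j
        have t3 : pd (fun y => ∑ i, u t y i * stress ν lam (u t) i j y) j x
            = ∑ i, (pd (fun y => u t y i) j x * stress ν lam (u t) i j x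
              + u t x i * pd (stress ν lam (u t) i j) j x) := by
          rw [pd_sum Finset.univ j (fun i _ => (dui i).fun_mul (dσ i j))]
          exact Finset.sum_congr rfl fun i _ => pd_mul j (dui i) (dσ i j)
        have tsq : pd (fun y => (p t y) ^ 2 + ∑ i, (u t y i) ^ 2) j x
            = 2 * p t x * pd (p t) j x + ∑ i, 2 * u t x i * pd (fun y => u t y i) j x := by
          rw [pd_add j (dP.fun_pow 2) (DifferentiableAt.fun_sum fun i _ => (dui i).fun_pow 2),
            pd_pow_two j dP, pd_sum Finset.univ j (fun i _ => (dui i).fun_pow 2)]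
          congr 1
          exact Finset.sum_congr rfl fun i _ => pd_pow_two j (dui i)
        have tF : pd (fun y => ((p t y) ^ 2 + ∑ i, (u t y i) ^ 2) / 2) j x
            = (2 * p t x * pd (p t) j x
                + ∑ i, 2 * u t x i * pd (fun y => u t y i) j x) / 2 := by
          rw [pd_div_const j (2:ℝ) dQ, tsq]
        have t1 : pd (fun y => U y j * (((p t y) ^ 2 + ∑ i, (u t y i) ^ 2) / 2)) j x
            = pd (fun y => U y j) j x * (((p t x) ^ 2 + ∑ i, (u t x i) ^ 2) / 2)
              + U x j * ((2 * p t x * pd (p t) j x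
                + ∑ i, 2 * u t x i * pd (fun y => u t y i) j x) / 2) := by
          rw [pd_mul j (dUj j) dF, tF]
        have t2 : pd (fun y => p t y * u t y j) j x
            = pd (p t) j x * u t x j + p t x * pd (fun y => u t y j) j x :=
          pd_mul j dP (dui j)
        calc pd (G j) j x
            = pd (fun y => (U y j * (((p t y) ^ 2 + ∑ i, (u t y i) ^ 2) / 2)
                + p t y * u t y j) - ∑ i, u t y i * stress ν lam (u t) i j y) j x := by
              simp only [hG_def]
          _ = pd (fun y => U y j * (((p t y) ^ 2 + ∑ i, (u t y i) ^ 2) / 2)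
                + p t y * u t y j) j x
              - pd (fun y => ∑ i, u t y i * stress ν lam (u t) i j y) j x :=
              pd_sub j (((dUj j).mul dF).add (dP.mul (dui j)))
                (DifferentiableAt.fun_sum fun i _ => (dui i).mul (dσ i j))
          _ = _ := by
              rw [pd_add j ((dUj j).fun_mul dF) (dP.fun_mul (dui j)), t1, t2, t3]
      have edtp : dtp (t, x) = -(∑ i, U x i * pd (p t) i x) - divg (u t) x := by
        have h := (hdp t ht x).deriv
        have e := hpde1 t ht x
        rw [h] at e
        linarith
      have edtu : ∀ i : Fin 3, dtu (t, x) i = -(∑ j, U x j * pd (fun y => u t y i) j x)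
          + divStress ν lam (u t) i x - η * u t x i - pd (p t) i x := by
        intro i
        have h := (hdu t ht x i).deriv
        have e := hpde2 t ht x i
        rw [h] at e
        linarith
      simp only [hA_def, edtp, edtu, hkey, divg, divStress, stress, strain,
        Fin.sum_univ_three, Fin.isValue, reduceIte, Fin.reduceEq]
      ring
    have hsz : ∀ x : E3, x ∉ K → ∀ i j : Fin 3, strain (u t) i j x = 0 :=
      fun x hx i j => strain_zero_of_nmem i j (hns x hx)
    have huz : ∀ x : E3, x ∉ K → ∀ i : Fin 3, u t x i = 0 :=
      fun x hx i => by rw [(hz t ht x hx).2]; rfl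
    have hS1 : Integrable (fun x : E3 =>
        ∑ i, ∑ j, stress ν lam (u t) i j x * strain (u t) i j x) := by
      refine Continuous.integrable_of_hasCompactSupport
        (continuous_finset_sum _ fun i _ => continuous_finset_sum _ fun j _ =>
          ((contDiff_stress hut i j).continuous.mul (contDiff_strain hut i j).continuous))
        (HasCompactSupport.intro hK fun x hx => ?_)
      simp [hsz x hx]
    have hS2 : Integrable (fun x : E3 => ∑ i, (u t x i) ^ 2) := by
      refine Continuous.integrable_of_hasCompactSupport
        (continuous_finset_sum _ fun i _ => ((contDiff_coord 1 hu1t i).continuous.pow 2))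
        (HasCompactSupport.intro hK fun x hx => ?_)
      simp [huz x hx]
    have hdUc : Continuous (divg U) := by
      unfold divg
      exact continuous_finset_sum _ fun j _ => continuous_pd (contDiff_coord 1 hU j) j
    have hS3 : Integrable (fun x : E3 => divg U x * ((p t x) ^ 2 + ∑ i, (u t x i) ^ 2)) := by
      refine Continuous.integrable_of_hasCompactSupport
        (hdUc.mul ((hptc.continuous.pow 2).add (continuous_finset_sum _ fun i _ =>
          ((contDiff_coord 1 hu1t i).continuous.pow 2))))
        (HasCompactSupport.intro hK fun x hx => ?_)
      simp [huz x hx, (hz t ht x hx).1]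
    have hpdG : ∀ j, Integrable (fun x : E3 => pd (G j) j x) := fun j =>
      (continuous_pd (hGc j) j).integrable_of_hasCompactSupport
        (HasCompactSupport.intro (hGsupp j) fun x hx => pd_eq_zero_of_nmem j hx)
    have hAe : A = fun x : E3 =>
        (-(∑ i, ∑ j, stress ν lam (u t) i j x * strain (u t) i j x)
          - η * (∑ i, (u t x i) ^ 2)
          + divg U x * (((p t x) ^ 2 + ∑ i, (u t x i) ^ 2)) / 2)
        - ∑ j, pd (G j) j x := funext hpid
    have h1c : Integrable (fun x : E3 =>
        -(∑ i, ∑ j, stress ν lam (u t) i j x * strain (u t) i j x)) := by exact hS1.neg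
    have h1d : Integrable (fun x : E3 => η * ∑ i, (u t x i) ^ 2) := by exact hS2.const_mul η
    have h1a : Integrable (fun x : E3 =>
        -(∑ i, ∑ j, stress ν lam (u t) i j x * strain (u t) i j x)
          - η * (∑ i, (u t x i) ^ 2)) := by exact h1c.sub h1d
    have h1b : Integrable (fun x : E3 =>
        divg U x * (((p t x) ^ 2 + ∑ i, (u t x i) ^ 2)) / 2) := by exact hS3.div_const 2
    have hRint : Integrable (fun x : E3 =>
        -(∑ i, ∑ j, stress ν lam (u t) i j x * strain (u t) i j x)
          - η * (∑ i, (u t x i) ^ 2)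
          + divg U x * (((p t x) ^ 2 + ∑ i, (u t x i) ^ 2)) / 2) := by exact h1a.add h1b
    rw [hΦint, hAe, integral_sub hRint (integrable_finset_sum _ fun j _ => hpdG j),
      integral_finset_sum _ (fun j _ => hpdG j)]
    simp only [hIBP, Finset.sum_const_zero, sub_zero]
    rw [integral_add h1a h1b, integral_sub h1c h1d, integral_neg, integral_const_mul, integral_div]
    ring
  rw [← hval]
  exact hE


end
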